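/- Let D be a locally nilpotent derivation of a commutative K-algebra B with char K = 0. Then the isotropy group of D equals the isotropy group of exp(D): an automorphism φ commutes with D if and only if φ commutes with exp(D). -/

import Mathlib

/-- `E` is the exponential of the locally nilpotent map `D`. -/
def IsExpOf (K : Type*) {B : Type*} [Field K] [CommRing B] [Algebra K B]
    (D E : B → B) : Prop :=
  ∀ b : B, ∃ n : ℕ, D^[n] b = 0 ∧
    E b = ∑ j ∈ Finset.range n, ((j.factorial : K)⁻¹) • D^[j] b

section Aux

variable {K B : Type*} [Field K] [CharZero K] [CommRing B] [Algebra K B]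

lemma aux_scalar_vanish {N : ℕ} (a : ℕ → K)
    (h : ∀ m : ℕ, ∑ j ∈ Finset.range N, (m : K) ^ j * a j = 0) :
    ∀ j < N, a j = 0 := by
  set p : Polynomial K := ∑ j ∈ Finset.range N, Polynomial.C (a j) * Polynomial.X ^ j with hp
  have hcoeff : ∀ j < N, p.coeff j = a j := by
    intro j hj
    rw [hp, Polynomial.finset_sum_coeff]
    rw [Finset.sum_eq_single j]
    · simp
    · intro i _ hij
      simp [Polynomial.coeff_C_mul, Polynomial.coeff_X_pow, Ne.symm hij]
    · intro hjm; exact absurd (Finset.mem_range.2 hj) hjm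
  have hroot : ∀ m : ℕ, p.IsRoot (m : K) := by
    intro m
    have := h m
    simp only [Polynomial.IsRoot, hp, Polynomial.eval_finset_sum, Polynomial.eval_mul,
      Polynomial.eval_C, Polynomial.eval_pow, Polynomial.eval_X]
    rw [← this]
    exact Finset.sum_congr rfl fun j _ => mul_comm _ _
  have hzero : p = 0 := by
    apply p.eq_zero_of_infinite_isRoot
    apply Set.Infinite.mono (s := Set.range ((↑) : ℕ → K))
    · rintro x ⟨m, rfl⟩; exact hroot m
    · exact Set.infinite_range_of_injective Nat.cast_injective
  intro j hj
  rw [← hcoeff j hj, hzero, Polynomial.coeff_zero]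

lemma aux_module_vanish {N : ℕ} (c : ℕ → B)
    (h : ∀ m : ℕ, ∑ j ∈ Finset.range N, (m : K) ^ j • c j = 0) :
    ∀ j < N, c j = 0 := by
  intro j hj
  let ℬ := Module.Basis.ofVectorSpace K B
  have h2 : ∀ i, ℬ.coord i (c j) = 0 := by
    intro i
    refine aux_scalar_vanish (fun j => ℬ.coord i (c j)) (fun m => ?_) j hj
    have := congrArg (ℬ.coord i) (h m)
    simpa [map_sum, map_smul, smul_eq_mul] using this
  have h3 : ℬ.repr (c j) = 0 := by
    ext i
    simpa [Module.Basis.coord_apply] using h2 i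
  exact (LinearEquiv.map_eq_zero_iff _).1 h3

lemma aux_fact_inv {j k : ℕ} (h : j ≤ k) :
    ((j.factorial : K))⁻¹ * (((k - j).factorial : K))⁻¹
      = (k.choose j : K) * ((k.factorial : K))⁻¹ := by
  have key : ((k.choose j : K)) * (j.factorial : K) * ((k - j).factorial : K)
      = (k.factorial : K) := by
    exact_mod_cast congrArg (Nat.cast (R := K)) (Nat.choose_mul_factorial_mul_factorial h)
  have h1 : (j.factorial : K) ≠ 0 := Nat.cast_ne_zero.2 (Nat.factorial_ne_zero _)
  have h2 : ((k - j).factorial : K) ≠ 0 := Nat.cast_ne_zero.2 (Nat.factorial_ne_zero _)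
  have h3 : (k.factorial : K) ≠ 0 := Nat.cast_ne_zero.2 (Nat.factorial_ne_zero _)
  have hC : (k.choose j : K) ≠ 0 := Nat.cast_ne_zero.2 (Nat.choose_pos h).ne'
  rw [← key, mul_inv, mul_inv, mul_assoc ((k.choose j : K))⁻¹, mul_inv_cancel_left₀ hC]

section D

variable (D E : B → B)
variable (hadd : ∀ x y : B, D (x + y) = D x + D y)
variable (hsmul : ∀ (c : K) (x : B), D (c • x) = c • D x)

include hsmul in
lemma aux_D_zero : D 0 = 0 := by
  have := hsmul 0 0
  simpa using this

include hadd hsmul in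
lemma aux_D_sum {ι : Type*} (s : Finset ι) (f : ι → B) :
    D (∑ i ∈ s, f i) = ∑ i ∈ s, D (f i) := by
  classical
  induction s using Finset.induction with
  | empty => simpa using aux_D_zero D hsmul
  | insert x s' hx ih => rw [Finset.sum_insert hx, hadd, ih, Finset.sum_insert hx]

include hsmul in
lemma aux_iter_smul (k : ℕ) (c : K) (x : B) : D^[k] (c • x) = c • D^[k] x := by
  induction k generalizing x with
  | zero => simp
  | succ k ih => rw [Function.iterate_succ_apply, hsmul, ih, ← Function.iterate_succ_apply]

include hadd hsmul in
lemma aux_iter_sum {ι : Type*} (k : ℕ) (s : Finset ι) (f : ι → B) :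
    D^[k] (∑ i ∈ s, f i) = ∑ i ∈ s, D^[k] (f i) := by
  induction k generalizing f with
  | zero => simp
  | succ k ih =>
    rw [Function.iterate_succ_apply, aux_D_sum D hadd hsmul]
    exact ih _

include hsmul in
lemma aux_iter_zero (k : ℕ) : D^[k] (0 : B) = 0 :=
  Function.iterate_fixed (aux_D_zero D hsmul) k

include hsmul in
lemma aux_iter_stable {b : B} {n m : ℕ} (hb : D^[n] b = 0) (hnm : n ≤ m) :
    D^[m] b = 0 := by
  obtain ⟨d, rfl⟩ := Nat.exists_eq_add_of_le hnm
  rw [Nat.add_comm, Function.iterate_add_apply, hb, aux_iter_zero D hsmul]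

include hsmul in
lemma aux_canonical (hE : IsExpOf K D E) (b : B) {N : ℕ} (hb : D^[N] b = 0) :
    E b = ∑ j ∈ Finset.range N, ((j.factorial : K)⁻¹) • D^[j] b := by
  obtain ⟨n, hn, hEb⟩ := hE b
  set M := max n N with hM
  have hpad : ∀ (L : ℕ), D^[L] b = 0 → L ≤ M →
      ∑ j ∈ Finset.range M, ((j.factorial : K)⁻¹) • D^[j] b
        = ∑ j ∈ Finset.range L, ((j.factorial : K)⁻¹) • D^[j] b := by
    intro L hL hLM
    symm
    apply Finset.sum_subset (Finset.range_subset_range.2 hLM)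
    intro x _ hx
    rw [aux_iter_stable D hsmul hL (le_of_not_gt (fun hc => hx (Finset.mem_range.2 hc))),
      smul_zero]
  rw [hEb, ← hpad n hn (le_max_left _ _), hpad N hb (le_max_right _ _)]

include hadd hsmul in
lemma aux_exp_iter (hE : IsExpOf K D E) (m : ℕ) (b : B) {N : ℕ} (hb : D^[N] b = 0) :
    E^[m] b = ∑ j ∈ Finset.range N,
      ((m : K) ^ j * ((j.factorial : K))⁻¹) • D^[j] b := by
  classical
  induction m generalizing b with
  | zero =>
    rcases Nat.eq_zero_or_pos N with hN | hN
    · subst hN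
      simpa using hb
    · rw [Function.iterate_zero_apply]
      rw [Finset.sum_eq_single_of_mem 0 (Finset.mem_range.2 hN)]
      · simp
      · intro i _ hi
        simp [zero_pow hi]
  | succ m ih =>
    have hEb := aux_canonical D E hsmul hE b hb
    have hDN : ∀ j : ℕ, D^[j] (E b) = ∑ i ∈ Finset.range N,
        ((i.factorial : K))⁻¹ • D^[j + i] b := by
      intro j
      rw [hEb, aux_iter_sum D hadd hsmul]
      refine Finset.sum_congr rfl fun i _ => ?_
      rw [aux_iter_smul D hsmul, ← Function.iterate_add_apply]
    have hbE : D^[N] (E b) = 0 := by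
      rw [hDN]
      apply Finset.sum_eq_zero
      intro i _
      rw [aux_iter_stable D hsmul hb (Nat.le_add_right _ _), smul_zero]
    rw [Function.iterate_succ_apply, ih (E b) hbE]
    have step1 : ∑ j ∈ Finset.range N,
        ((m : K) ^ j * ((j.factorial : K))⁻¹) • D^[j] (E b)
        = ∑ p ∈ Finset.range N ×ˢ Finset.range N,
            (((m : K) ^ p.1 * ((p.1.factorial : K))⁻¹) * ((p.2.factorial : K))⁻¹)
              • D^[p.1 + p.2] b := by
      rw [Finset.sum_product]
      refine Finset.sum_congr rfl fun j _ => ?_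
      rw [hDN j, Finset.smul_sum]
      refine Finset.sum_congr rfl fun i _ => ?_
      rw [smul_smul]
    rw [step1]
    set g : ℕ × ℕ → B := fun p =>
      (((m : K) ^ p.1 * ((p.1.factorial : K))⁻¹) * ((p.2.factorial : K))⁻¹)
        • D^[p.1 + p.2] b with hg
    have step2 : ∑ p ∈ Finset.range N ×ˢ Finset.range N, g p
        = ∑ k ∈ Finset.range (2 * N),
            ∑ p ∈ (Finset.range N ×ˢ Finset.range N).filter (fun p => p.1 + p.2 = k), g p := by
      symm
      apply Finset.sum_fiberwise_of_maps_to
      intro p hp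
      rw [Finset.mem_product] at hp
      rw [Finset.mem_range]
      have h1 := Finset.mem_range.1 hp.1
      have h2 := Finset.mem_range.1 hp.2
      omega
    rw [step2]
    have step3 : ∑ k ∈ Finset.range (2 * N),
        ∑ p ∈ (Finset.range N ×ˢ Finset.range N).filter (fun p => p.1 + p.2 = k), g p
        = ∑ k ∈ Finset.range N,
            ∑ p ∈ (Finset.range N ×ˢ Finset.range N).filter (fun p => p.1 + p.2 = k), g p := by
      symm
      apply Finset.sum_subset (Finset.range_subset_range.2 (by omega))
      intro k _ hk
      apply Finset.sum_eq_zero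
      intro p hp
      rw [Finset.mem_filter] at hp
      have hkN : N ≤ k := le_of_not_gt (fun hc => hk (Finset.mem_range.2 hc))
      rw [hg]
      simp only
      rw [hp.2, aux_iter_stable D hsmul hb hkN, smul_zero]
    rw [step3]
    refine Finset.sum_congr rfl fun k hk => ?_
    have hkN := Finset.mem_range.1 hk
    have hfilter : (Finset.range N ×ˢ Finset.range N).filter (fun p => p.1 + p.2 = k)
        = Finset.HasAntidiagonal.antidiagonal k := by
      ext p
      simp only [Finset.mem_filter, Finset.mem_product, Finset.mem_range,
        Finset.HasAntidiagonal.mem_antidiagonal]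
      omega
    rw [hfilter, Finset.Nat.sum_antidiagonal_eq_sum_range_succ_mk]
    have hterm : ∀ j ∈ Finset.range (k + 1), g (j, k - j)
        = ((m : K) ^ j * (k.choose j : K) * ((k.factorial : K))⁻¹) • D^[k] b := by
      intro j hj
      have hjk : j ≤ k := Nat.lt_succ_iff.1 (Finset.mem_range.1 hj)
      rw [hg]
      simp only
      rw [Nat.add_sub_cancel' hjk, mul_assoc, aux_fact_inv hjk, ← mul_assoc]
    rw [Finset.sum_congr rfl hterm, ← Finset.sum_smul]
    congr 1
    have : ∑ j ∈ Finset.range (k + 1), (m : K) ^ j * (k.choose j : K) * ((k.factorial : K))⁻¹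
        = (∑ j ∈ Finset.range (k + 1), (m : K) ^ j * (k.choose j : K)) * ((k.factorial : K))⁻¹ := by
      rw [Finset.sum_mul]
    rw [this]
    congr 1
    have hbinom := add_pow (m : K) 1 k
    push_cast
    rw [hbinom]
    exact Finset.sum_congr rfl fun j _ => by ring

end D

end Aux

/-- For a locally nilpotent derivation `D`, the isotropy group of `D` equals
the isotropy group of `exp(D)`: an automorphism `φ` commutes with `D` iff it
commutes with `exp(D)`. -/
theorem isotropy_eq_isotropy_exp_of_lnd
    {K B : Type*} [Field K] [CharZero K] [CommRing B] [Algebra K B]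
    (D E : B → B) (φ : B ≃ₐ[K] B)
    (hadd : ∀ x y : B, D (x + y) = D x + D y)
    (hsmul : ∀ (c : K) (x : B), D (c • x) = c • D x)
    (hLeibniz : ∀ x y : B, D (x * y) = x * D y + y * D x)
    (hlnd : ∀ b : B, ∃ n : ℕ, D^[n] b = 0)
    (hE : IsExpOf K D E) :
    (∀ b : B, φ (D b) = D (φ b)) ↔ (∀ b : B, φ (E b) = E (φ b)) := by
  constructor
  · -- forward
    intro hcomm b
    have hiter : ∀ (j : ℕ) (x : B), φ (D^[j] x) = D^[j] (φ x) := by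
      intro j
      induction j with
      | zero => simp
      | succ j ih =>
        intro x
        rw [Function.iterate_succ_apply, ih (D x), hcomm, ← Function.iterate_succ_apply]
    obtain ⟨n, hn, _⟩ := hE b
    have hnφ : D^[n] (φ b) = 0 := by rw [← hiter, hn, map_zero]
    rw [aux_canonical D E hsmul hE b hn, aux_canonical D E hsmul hE (φ b) hnφ,
      map_sum]
    refine Finset.sum_congr rfl fun j _ => ?_
    rw [map_smul, hiter]
  · -- reverse
    intro hcomm b
    set G : B → B := fun x => φ.symm (D (φ x)) with hG
    have hGiter : ∀ (j : ℕ) (x : B), G^[j] x = φ.symm (D^[j] (φ x)) := by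
      intro j
      induction j with
      | zero => simp
      | succ j ih =>
        intro x
        rw [Function.iterate_succ_apply, ih, hG]
        simp only
        rw [AlgEquiv.apply_symm_apply, ← Function.iterate_succ_apply]
    have hGadd : ∀ x y : B, G (x + y) = G x + G y := by
      intro x y; rw [hG]; simp only [map_add, hadd]
    have hGsmul : ∀ (c : K) (x : B), G (c • x) = c • G x := by
      intro c x; rw [hG]; simp only [map_smul, hsmul]
    have hEG : IsExpOf K G E := by
      intro x
      obtain ⟨n, hn, hEx⟩ := hE (φ x)
      refine ⟨n, ?_, ?_⟩
      · rw [hGiter, hn, map_zero]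
      · have : E x = φ.symm (E (φ x)) := by
          rw [← hcomm x, AlgEquiv.symm_apply_apply]
        rw [this, hEx, map_sum]
        refine Finset.sum_congr rfl fun j _ => ?_
        rw [map_smul, hGiter]
    -- common nilpotency bound
    obtain ⟨n₁, hn₁⟩ := hlnd b
    obtain ⟨n₂, hn₂, _⟩ := hEG b
    set N := max n₁ n₂ + 2 with hN
    have hDN : D^[N] b = 0 := aux_iter_stable D hsmul hn₁ (by omega)
    have hGN : G^[N] b = 0 := aux_iter_stable G hGsmul hn₂ (by omega)
    have hkey : ∀ m : ℕ, ∑ j ∈ Finset.range N,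
        (m : K) ^ j • (((j.factorial : K))⁻¹ • (D^[j] b - G^[j] b)) = 0 := by
      intro m
      have h1 := aux_exp_iter D E hadd hsmul hE m b hDN
      have h2 := aux_exp_iter G E hGadd hGsmul hEG m b hGN
      have : ∑ j ∈ Finset.range N, ((m : K) ^ j * ((j.factorial : K))⁻¹) • D^[j] b
          - ∑ j ∈ Finset.range N, ((m : K) ^ j * ((j.factorial : K))⁻¹) • G^[j] b = 0 := by
        rw [← h1, ← h2, sub_self]
      rw [← Finset.sum_sub_distrib] at this
      rw [← this]
      refine Finset.sum_congr rfl fun j _ => ?_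
      rw [smul_smul, smul_sub]
    have hc := aux_module_vanish (K := K)
      (fun j => ((j.factorial : K))⁻¹ • (D^[j] b - G^[j] b)) hkey 1 (by omega)
    simp only [Nat.factorial_one, Nat.cast_one, inv_one, one_smul,
      Function.iterate_one, sub_eq_zero] at hc
    rw [hc, hG]
    simp only
    rw [AlgEquiv.apply_symm_apply]
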